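/- arXiv:2407.07344 — 2 statements merged into one kernel-verified Lean document; each statement's English description precedes it below -/
import Mathlib

section
/- Let R be a commutative ring and M a finite free R-module of rank r ≥ 1. Then the wedge-product pairing ⋀^{r−1} M ⊗ M → ⋀^r M induces an isomorphism of R-modules ⋀^{r−1} M ≅ ⋀^r M ⊗ M^*, where M^* = Hom_R(M, R). -/
open TensorProduct

/-- Contraction against `m : M`: sends `t ⊗ φ ∈ ⋀^r M ⊗ M^*` to `φ(m) • t`,
viewed in the exterior algebra. -/
noncomputable def contractAt (R : Type*) [CommRing R] (M : Type*) [AddCommGroup M]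
    [Module R M] (r : ℕ) (m : M) :
    ((⋀[R]^r M) ⊗[R] Module.Dual R M) →ₗ[R] ExteriorAlgebra R M :=
  TensorProduct.lift
    { toFun := fun t =>
        { toFun := fun φ => φ m • (t : ExteriorAlgebra R M)
          map_add' := by intro φ ψ; simp [add_smul]
          map_smul' := by intro c φ; simp [mul_smul] }
      map_add' := by intro t₁ t₂; ext φ; simp [smul_add]
      map_smul' := by
        intro c t
        ext φ
        simp only [LinearMap.coe_mk, AddHom.coe_mk, RingHom.id_apply,
          LinearMap.smul_apply, Submodule.coe_smul]
        exact smul_comm _ _ _ }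

namespace ExtPowAux

open ExteriorAlgebra

variable {R : Type*} [CommRing R] {M : Type*} [AddCommGroup M] [Module R M]

/-- Commutation of a degree-`k` element with a vector, up to sign. -/
lemma mul_ι_comm (k : ℕ) (m : M) :
    ∀ {x : ExteriorAlgebra R M}, x ∈ ⋀[R]^k M →
      x * ι R m = ((-1 : R) ^ k) • (ι R m * x) := by
  induction k with
  | zero =>
    intro x hx
    have hx' : x ∈ (1 : Submodule R (ExteriorAlgebra R M)) := by
      have h : x ∈ (LinearMap.range (ι R : M →ₗ[R] ExteriorAlgebra R M)) ^ 0 := hx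
      rwa [pow_zero] at h
    obtain ⟨c, rfl⟩ := Submodule.mem_one.mp hx'
    simp [Algebra.commutes]
  | succ k ih =>
    intro x hx
    have hx' : x ∈ LinearMap.range (ι R : M →ₗ[R] ExteriorAlgebra R M) *
        (LinearMap.range (ι R : M →ₗ[R] ExteriorAlgebra R M)) ^ k := by
      have h : x ∈ (LinearMap.range (ι R : M →ₗ[R] ExteriorAlgebra R M)) ^ (k + 1) := hx
      rwa [pow_succ'] at h
    refine Submodule.mul_induction_on hx' ?_ ?_
    · rintro a ⟨n, rfl⟩ y hy
      have hanti : ι R n * ι R m = -(ι R m * ι R n) :=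
        eq_neg_of_add_eq_zero_left (ι_add_mul_swap n m)
      calc ι R n * y * ι R m = ι R n * (y * ι R m) := by rw [mul_assoc]
        _ = ι R n * (((-1 : R) ^ k) • (ι R m * y)) := by rw [ih hy]
        _ = ((-1 : R) ^ k) • (ι R n * ι R m * y) := by
            rw [mul_smul_comm, mul_assoc]
        _ = ((-1 : R) ^ k) • (-(ι R m * (ι R n * y))) := by
            rw [hanti, neg_mul, mul_assoc]
        _ = ((-1 : R) ^ (k + 1)) • (ι R m * (ι R n * y)) := by
            rw [smul_neg, pow_succ, mul_comm ((-1 : R) ^ k) (-1 : R), mul_smul,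
              neg_one_smul]
    · intro y z hy hz
      rw [add_mul, hy, hz, mul_add, smul_add]

/-- Left contraction lowers the degree by one. -/
lemma contract_mem (φ : Module.Dual R M) (k : ℕ) :
    ∀ {x : ExteriorAlgebra R M}, x ∈ ⋀[R]^(k + 1) M →
      CliffordAlgebra.contractLeft φ x ∈ ⋀[R]^k M := by
  induction k with
  | zero =>
    intro x hx
    have hx' : x ∈ LinearMap.range (ι R : M →ₗ[R] ExteriorAlgebra R M) := by
      have h : x ∈ (LinearMap.range (ι R : M →ₗ[R] ExteriorAlgebra R M)) ^ (0 + 1) := hx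
      rwa [zero_add, pow_one] at h
    obtain ⟨n, rfl⟩ := hx'
    rw [CliffordAlgebra.contractLeft_ι]
    show algebraMap R (ExteriorAlgebra R M) (φ n) ∈
      (LinearMap.range (ι R : M →ₗ[R] ExteriorAlgebra R M)) ^ 0
    rw [pow_zero, Submodule.mem_one]
    exact ⟨φ n, rfl⟩
  | succ k ih =>
    intro x hx
    have hx' : x ∈ LinearMap.range (ι R : M →ₗ[R] ExteriorAlgebra R M) *
        (LinearMap.range (ι R : M →ₗ[R] ExteriorAlgebra R M)) ^ (k + 1) := by
      have h : x ∈ (LinearMap.range (ι R : M →ₗ[R] ExteriorAlgebra R M)) ^ (k + 1 + 1) := hx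
      rwa [pow_succ'] at h
    refine Submodule.mul_induction_on hx' ?_ ?_
    · rintro a ⟨n, rfl⟩ y hy
      rw [CliffordAlgebra.contractLeft_ι_mul]
      refine sub_mem (Submodule.smul_mem _ _ hy) ?_
      have h : ι R n * CliffordAlgebra.contractLeft φ y ∈
          (LinearMap.range (ι R : M →ₗ[R] ExteriorAlgebra R M)) ^ (k + 1) := by
        rw [pow_succ']
        exact Submodule.mul_mem_mul (LinearMap.mem_range_self _ n) (ih hy)
      exact h
    · intro y z hy hz
      rw [map_add]; exact add_mem hy hz

/-- The Euler-type identity: contracting `x * b i` by the dual basis and summing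
multiplies a degree-`k` element by `(-1)^k (r - k)`. -/
lemma euler {r : ℕ} (b : Module.Basis (Fin r) R M) (k : ℕ) :
    ∀ {x : ExteriorAlgebra R M}, x ∈ ⋀[R]^k M →
      ∑ i, CliffordAlgebra.contractLeft (b.coord i) (x * ι R (b i)) =
        (((-1 : R) ^ k) * ((r : R) - (k : R))) • x := by
  induction k with
  | zero =>
    intro x hx
    have hx' : x ∈ (1 : Submodule R (ExteriorAlgebra R M)) := by
      have h : x ∈ (LinearMap.range (ι R : M →ₗ[R] ExteriorAlgebra R M)) ^ 0 := hx
      rwa [pow_zero] at h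
    obtain ⟨c, rfl⟩ := Submodule.mem_one.mp hx'
    have h1 : ∀ i : Fin r,
        CliffordAlgebra.contractLeft (b.coord i) (algebraMap R _ c * ι R (b i)) =
          c • (1 : ExteriorAlgebra R M) := by
      intro i
      rw [CliffordAlgebra.contractLeft_algebraMap_mul, CliffordAlgebra.contractLeft_ι]
      simp [Algebra.algebraMap_eq_smul_one]
    rw [Finset.sum_congr rfl fun i _ => h1 i, Finset.sum_const, Finset.card_univ,
      Fintype.card_fin]
    rw [Algebra.algebraMap_eq_smul_one (A := ExteriorAlgebra R M) c]
    have h2 : (((-1 : R) ^ 0) * ((r : R) - ((0 : ℕ) : R))) = (r : R) := by simp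
    rw [h2, Nat.cast_smul_eq_nsmul]
  | succ k ih =>
    intro x hx
    have hx' : x ∈ LinearMap.range (ι R : M →ₗ[R] ExteriorAlgebra R M) *
        (LinearMap.range (ι R : M →ₗ[R] ExteriorAlgebra R M)) ^ k := by
      have h : x ∈ (LinearMap.range (ι R : M →ₗ[R] ExteriorAlgebra R M)) ^ (k + 1) := hx
      rwa [pow_succ'] at h
    refine Submodule.mul_induction_on hx' ?_ ?_
    · rintro a ⟨n, rfl⟩ y hy
      have hstep : ∀ i : Fin r,
          CliffordAlgebra.contractLeft (b.coord i) (ι R n * y * ι R (b i)) =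
            b.coord i n • (y * ι R (b i)) -
              ι R n * CliffordAlgebra.contractLeft (b.coord i) (y * ι R (b i)) := by
        intro i
        rw [mul_assoc, CliffordAlgebra.contractLeft_ι_mul]
      rw [Finset.sum_congr rfl fun i _ => hstep i, Finset.sum_sub_distrib]
      have hsum1 : ∑ i, b.coord i n • (y * ι R (b i)) = y * ι R n := by
        calc ∑ i, b.coord i n • (y * ι R (b i))
            = y * ∑ i, b.coord i n • ι R (b i) := by
              rw [Finset.mul_sum]
              exact Finset.sum_congr rfl fun i _ => (mul_smul_comm _ _ _).symm
          _ = y * ι R (∑ i, b.coord i n • b i) := by rw [map_sum]; simp only [map_smul]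
          _ = y * ι R n := by
              congr 1
              simp only [Module.Basis.coord_apply]
              exact congrArg (ι R) (b.sum_repr n)
      have hsum2 : ∑ i, ι R n * CliffordAlgebra.contractLeft (b.coord i) (y * ι R (b i)) =
          ι R n * ((((-1 : R) ^ k) * ((r : R) - (k : R))) • y) := by
        rw [← Finset.mul_sum, ih hy]
      rw [hsum1, hsum2, mul_ι_comm k n hy, mul_smul_comm]
      rw [← sub_smul]
      congr 1
      push_cast
      ring
    · intro y z hy hz
      have h : ∀ i : Fin r,
          CliffordAlgebra.contractLeft (b.coord i) ((y + z) * ι R (b i)) =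
            CliffordAlgebra.contractLeft (b.coord i) (y * ι R (b i)) +
              CliffordAlgebra.contractLeft (b.coord i) (z * ι R (b i)) := by
        intro i; rw [add_mul, map_add]
      rw [Finset.sum_congr rfl fun i _ => h i, Finset.sum_add_distrib, hy, hz, smul_add]

/-- Any wedge of `r + 1` vectors vanishes when `M` has a basis of cardinality `r`. -/
lemma ιMulti_top_eq_zero {r : ℕ} (b : Module.Basis (Fin r) R M) (v : Fin (r + 1) → M) :
    ιMulti R (r + 1) v = 0 := by
  classical
  have hv : (fun i => v i) = fun i => ∑ j, b.repr (v i) j • b j := by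
    funext i; exact (b.sum_repr (v i)).symm
  have h : ιMulti R (r + 1) v =
      (ιMulti R (r + 1)).toMultilinearMap (fun i => ∑ j, b.repr (v i) j • b j) := by
    rw [← hv]; rfl
  rw [h, MultilinearMap.map_sum]
  refine Finset.sum_eq_zero fun p _ => ?_
  rw [MultilinearMap.map_smul_univ]
  have hnotinj : ¬ Function.Injective (fun i => b (p i)) := by
    obtain ⟨i, j, hij, hpij⟩ :=
      Fintype.exists_ne_map_eq_of_card_lt p (by simp)
    intro hinj
    exact hij (hinj (by simp [hpij]))
  have h0 : (ιMulti R (r + 1)).toMultilinearMap (fun i => b (p i)) = 0 :=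
    (ιMulti R (r + 1)).map_eq_zero_of_not_injective _ hnotinj
  rw [h0, smul_zero]

lemma top_power_eq_bot {r : ℕ} (b : Module.Basis (Fin r) R M) :
    (⋀[R]^(r + 1) M) = ⊥ := by
  rw [← ιMulti_span_fixedDegree, Submodule.span_eq_bot]
  rintro x ⟨v, rfl⟩
  exact ιMulti_top_eq_zero b v

/-- Contracting a top-degree element and wedging with a vector recovers evaluation. -/
lemma top_contract {r : ℕ} (hr : 1 ≤ r) (b : Module.Basis (Fin r) R M) (φ : Module.Dual R M)
    {t : ExteriorAlgebra R M} (ht : t ∈ ⋀[R]^r M) (m : M) :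
    (CliffordAlgebra.contractLeft φ t) * ι R m = ((-1 : R) ^ (r - 1)) • (φ m • t) := by
  have h1 : ι R m * t = 0 := by
    have h : ι R m * t ∈ (LinearMap.range (ι R : M →ₗ[R] ExteriorAlgebra R M)) ^ (r + 1) := by
      rw [pow_succ']
      exact Submodule.mul_mem_mul (LinearMap.mem_range_self _ m) ht
    have hb := top_power_eq_bot b (M := M)
    rw [Submodule.eq_bot_iff] at hb
    exact hb _ h
  have h2 : ι R m * CliffordAlgebra.contractLeft φ t = φ m • t := by
    have h := CliffordAlgebra.contractLeft_ι_mul (d := φ) m t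
    rw [h1, map_zero] at h
    exact (eq_of_sub_eq_zero h.symm).symm
  have h3 : CliffordAlgebra.contractLeft φ t ∈ ⋀[R]^(r - 1) M := by
    apply contract_mem φ (r - 1)
    rwa [Nat.sub_add_cancel hr]
  rw [mul_ι_comm (r - 1) m h3, h2]


section Maps

variable {r : ℕ}

lemma contract_mem' (hr : 1 ≤ r) (t : ⋀[R]^r M) (φ : Module.Dual R M) :
    CliffordAlgebra.contractLeft φ (t : ExteriorAlgebra R M) ∈ ⋀[R]^(r - 1) M := by
  apply contract_mem φ (r - 1)
  rw [Nat.sub_add_cancel hr]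
  exact t.2

/-- Wedging on the right with a vector, as a map `⋀^{r-1} M → ⋀^r M`. -/
noncomputable def wedgeι (hr : 1 ≤ r) (v : M) :
    (⋀[R]^(r - 1) M) →ₗ[R] (⋀[R]^r M) :=
  LinearMap.codRestrict _ ((LinearMap.mulRight R (ι R v)) ∘ₗ (Submodule.subtype _))
    (fun x => by
      have h : (x : ExteriorAlgebra R M) * ι R v ∈
          (LinearMap.range (ι R : M →ₗ[R] ExteriorAlgebra R M)) ^ (r - 1 + 1) := by
        rw [pow_succ]
        exact Submodule.mul_mem_mul x.2 (LinearMap.mem_range_self _ v)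
      rwa [Nat.sub_add_cancel hr] at h)

@[simp] lemma wedgeι_coe (hr : 1 ≤ r) (v : M) (x : ⋀[R]^(r - 1) M) :
    ((wedgeι hr v x : ⋀[R]^r M) : ExteriorAlgebra R M) =
      (x : ExteriorAlgebra R M) * ι R v := rfl

/-- The map `⋀^{r-1} M → ⋀^r M ⊗ M^*` induced by a basis. -/
noncomputable def Fmap (hr : 1 ≤ r) (b : Module.Basis (Fin r) R M) :
    (⋀[R]^(r - 1) M) →ₗ[R] ((⋀[R]^r M) ⊗[R] Module.Dual R M) :=
  ∑ i, ((TensorProduct.mk R (⋀[R]^r M) (Module.Dual R M)).flip (b.coord i)) ∘ₗ wedgeι hr (b i)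

lemma Fmap_apply (hr : 1 ≤ r) (b : Module.Basis (Fin r) R M) (x : ⋀[R]^(r - 1) M) :
    Fmap hr b x = ∑ i, (wedgeι hr (b i) x) ⊗ₜ[R] b.coord i := by
  simp [Fmap, LinearMap.sum_apply]

/-- The contraction map `⋀^r M ⊗ M^* → ⋀^{r-1} M`. -/
noncomputable def Gmap (hr : 1 ≤ r) :
    ((⋀[R]^r M) ⊗[R] Module.Dual R M) →ₗ[R] (⋀[R]^(r - 1) M) :=
  TensorProduct.lift
    { toFun := fun t =>
        { toFun := fun φ =>
            ⟨CliffordAlgebra.contractLeft φ (t : ExteriorAlgebra R M), contract_mem' hr t φ⟩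
          map_add' := fun φ ψ => Subtype.ext <| by
            simp only [map_add, LinearMap.add_apply, Submodule.coe_add]
          map_smul' := fun c φ => Subtype.ext <| by
            simp only [map_smul, LinearMap.smul_apply, SetLike.val_smul, RingHom.id_apply] }
      map_add' := fun t s => LinearMap.ext fun φ => Subtype.ext <| by
        simp only [LinearMap.coe_mk, AddHom.coe_mk, LinearMap.add_apply, Submodule.coe_add,
          map_add]
      map_smul' := fun c t => LinearMap.ext fun φ => Subtype.ext <| by
        simp only [LinearMap.coe_mk, AddHom.coe_mk, LinearMap.smul_apply, SetLike.val_smul,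
          map_smul, RingHom.id_apply] }

lemma Gmap_tmul (hr : 1 ≤ r) (t : ⋀[R]^r M) (φ : Module.Dual R M) :
    Gmap hr (t ⊗ₜ[R] φ) =
      ⟨CliffordAlgebra.contractLeft φ (t : ExteriorAlgebra R M), contract_mem' hr t φ⟩ := by
  simp [Gmap, TensorProduct.lift.tmul]

end Maps

end ExtPowAux

open ExteriorAlgebra ExtPowAux

/-- For a finite free module `M` of rank `r ≥ 1`, the wedge pairing
`⋀^{r-1} M ⊗ M → ⋀^r M` induces an isomorphism `⋀^{r-1} M ≅ ⋀^r M ⊗ M^*`: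
there is a linear equivalence under which contracting `e x` against `m`
recovers the wedge product `x ∧ m`. -/
theorem exteriorPower_pred_iso_det_tensor_dual
    (R : Type*) [CommRing R] (M : Type*) [AddCommGroup M] [Module R M]
    [Module.Free R M] [Module.Finite R M] (r : ℕ) (hr : 1 ≤ r)
    (hrank : Module.finrank R M = r) :
    ∃ e : (⋀[R]^(r - 1) M) ≃ₗ[R] ((⋀[R]^r M) ⊗[R] Module.Dual R M),
      ∀ (x : ⋀[R]^(r - 1) M) (m : M),
        contractAt R M r m (e x) =
          (x : ExteriorAlgebra R M) * ExteriorAlgebra.ι R m := by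
  classical
  -- a basis of `M` indexed by `Fin r`
  have hbasis : Nonempty (Module.Basis (Fin r) R M) := by
    rcases subsingleton_or_nontrivial R with h | h
    · haveI := Module.subsingleton R M
      haveI : Subsingleton (Fin r →₀ R) :=
        ⟨fun f g => Finsupp.ext fun i => Subsingleton.elim _ _⟩
      exact ⟨Module.Basis.ofRepr (LinearEquiv.ofSubsingleton _ _)⟩
    · exact ⟨Module.finBasisOfFinrankEq R M hrank⟩
  obtain ⟨b⟩ := hbasis
  set F := Fmap hr b with hFdef
  set G := Gmap (R := R) (M := M) hr with hGdef
  -- scalar bookkeeping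
  have hsc : ((r : R) - ((r - 1 : ℕ) : R)) = 1 := by
    rw [Nat.cast_sub hr]
    push_cast
    ring
  have hsq : ((-1 : R) ^ (r - 1)) * ((-1 : R) ^ (r - 1)) = 1 := by
    rw [← pow_add]
    exact Even.neg_one_pow ⟨r - 1, rfl⟩
  -- G ∘ F = (-1)^(r-1) • id
  have hGF : ∀ x : ⋀[R]^(r - 1) M, G (F x) = ((-1 : R) ^ (r - 1)) • x := by
    intro x
    rw [hFdef, hGdef, Fmap_apply, map_sum]
    apply Subtype.ext
    rw [AddSubmonoidClass.coe_finset_sum]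
    have hterm : ∀ i : Fin r,
        ((Gmap (R := R) (M := M) hr ((wedgeι hr (b i) x) ⊗ₜ[R] b.coord i) :
            ⋀[R]^(r - 1) M) : ExteriorAlgebra R M) =
          CliffordAlgebra.contractLeft (b.coord i)
            ((x : ExteriorAlgebra R M) * ι R (b i)) := by
      intro i
      rw [Gmap_tmul]
      simp
    rw [Finset.sum_congr rfl fun i _ => hterm i]
    rw [euler b (r - 1) x.2, hsc, mul_one]
    simp
  -- F ∘ G = (-1)^(r-1) • id
  have hFG : ∀ (t : ⋀[R]^r M) (φ : Module.Dual R M),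
      F (G (t ⊗ₜ[R] φ)) = ((-1 : R) ^ (r - 1)) • (t ⊗ₜ[R] φ) := by
    intro t φ
    rw [hGdef, hFdef, Gmap_tmul, Fmap_apply]
    have hterm : ∀ i : Fin r,
        (wedgeι hr (b i)
            ⟨CliffordAlgebra.contractLeft φ (t : ExteriorAlgebra R M), contract_mem' hr t φ⟩)
            ⊗ₜ[R] b.coord i =
          ((-1 : R) ^ (r - 1)) • (t ⊗ₜ[R] (φ (b i) • b.coord i)) := by
      intro i
      have hval : (wedgeι hr (b i)
          ⟨CliffordAlgebra.contractLeft φ (t : ExteriorAlgebra R M), contract_mem' hr t φ⟩ :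
            ⋀[R]^r M) = ((-1 : R) ^ (r - 1)) • (φ (b i) • t) := by
        apply Subtype.ext
        rw [wedgeι_coe]
        show CliffordAlgebra.contractLeft φ (t : ExteriorAlgebra R M) * ι R (b i) = _
        rw [top_contract hr b φ t.2 (b i)]
        simp
      rw [hval]
      simp [smul_tmul', tmul_smul, smul_smul, mul_comm]
    rw [Finset.sum_congr rfl fun i _ => hterm i, ← Finset.smul_sum]
    congr 1
    rw [← TensorProduct.tmul_sum]
    rw [b.sum_dual_apply_smul_coord φ]
  -- assemble the equivalence
  set G' : ((⋀[R]^r M) ⊗[R] Module.Dual R M) →ₗ[R] (⋀[R]^(r - 1) M) :=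
    ((-1 : R) ^ (r - 1)) • G with hG'def
  have hcomp1 : F ∘ₗ G' = LinearMap.id := by
    apply TensorProduct.ext'
    intro t φ
    rw [LinearMap.comp_apply, hG'def, LinearMap.smul_apply, map_smul, hFG, smul_smul, hsq,
      one_smul, LinearMap.id_apply]
  have hcomp2 : G' ∘ₗ F = LinearMap.id := by
    refine LinearMap.ext fun x => ?_
    rw [LinearMap.comp_apply, hG'def, LinearMap.smul_apply, hGF, smul_smul, hsq, one_smul,
      LinearMap.id_apply]
  refine ⟨LinearEquiv.ofLinear F G' hcomp1 hcomp2, ?_⟩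
  intro x m
  show contractAt R M r m (F x) = (x : ExteriorAlgebra R M) * ι R m
  rw [hFdef, Fmap_apply, map_sum]
  have hterm : ∀ i : Fin r,
      contractAt R M r m ((wedgeι hr (b i) x) ⊗ₜ[R] b.coord i) =
        b.coord i m • ((x : ExteriorAlgebra R M) * ι R (b i)) := by
    intro i
    have h : contractAt R M r m ((wedgeι hr (b i) x) ⊗ₜ[R] b.coord i) =
        b.coord i m • ((wedgeι hr (b i) x : ⋀[R]^r M) : ExteriorAlgebra R M) := by
      simp [contractAt]
    rw [h, wedgeι_coe]
  rw [Finset.sum_congr rfl fun i _ => hterm i]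
  calc ∑ i, b.coord i m • ((x : ExteriorAlgebra R M) * ι R (b i))
      = (x : ExteriorAlgebra R M) * ∑ i, b.coord i m • ι R (b i) := by
        rw [Finset.mul_sum]
        exact Finset.sum_congr rfl fun i _ => (mul_smul_comm _ _ _).symm
    _ = (x : ExteriorAlgebra R M) * ι R (∑ i, b.coord i m • b i) := by
        rw [map_sum]; simp only [map_smul]
    _ = (x : ExteriorAlgebra R M) * ι R m := by
        congr 1
        simp only [Module.Basis.coord_apply]
        exact congrArg (ι R) (b.sum_repr m)
end

section
/- Let (rE, dE), (rF, dF), (rE', dE') be integer pairs with positive first coordinates, slopes dE/rE ≤ dF/rF ≤ dE'/rE' with dE/rE < dE'/rE', and rF ≤ rE' < rE. Then ⟨E → F⟩ + ⟨F → E'⟩ ≤ ⟨E → E'⟩, where ⟨(r,d) → (r',d')⟩ := d'r − dr'; and equality holds if and only if dF/rF = dE'/rE' and rF = rE' (equivalently (rF, dF) = (rE', dE')). -/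
/-- The Euler-type bracket on charges: `⟨(r,d) → (r',d')⟩ = d'·r − d·r'`. -/
def chargeBracket (z w : ℤ × ℤ) : ℤ := w.2 * z.1 - z.2 * w.1

theorem bracket_subadditive_through_intermediate
    (rE dE rF dF rE' dE' : ℤ) (hrE : 0 < rE) (hrF : 0 < rF) (hrE' : 0 < rE')
    (h1 : (dE : ℚ) / rE ≤ (dF : ℚ) / rF) (h2 : (dF : ℚ) / rF ≤ (dE' : ℚ) / rE')
    (h3 : (dE : ℚ) / rE < (dE' : ℚ) / rE') (h4 : rF ≤ rE') (h5 : rE' < rE) :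
    chargeBracket (rE, dE) (rF, dF) + chargeBracket (rF, dF) (rE', dE') ≤
      chargeBracket (rE, dE) (rE', dE') ∧
    (chargeBracket (rE, dE) (rF, dF) + chargeBracket (rF, dF) (rE', dE') =
        chargeBracket (rE, dE) (rE', dE') ↔
      (dF : ℚ) / rF = (dE' : ℚ) / rE' ∧ rF = rE') := by
  have hrEQ : (0:ℚ) < rE := by exact_mod_cast hrE
  have hrFQ : (0:ℚ) < rF := by exact_mod_cast hrF
  have hrE'Q : (0:ℚ) < rE' := by exact_mod_cast hrE'
  rw [div_le_div_iff₀ hrEQ hrFQ] at h1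
  rw [div_le_div_iff₀ hrFQ hrE'Q] at h2
  rw [div_lt_div_iff₀ hrEQ hrE'Q] at h3
  have h1' : dE * rF ≤ dF * rE := by exact_mod_cast h1
  have h2' : dF * rE' ≤ dE' * rF := by exact_mod_cast h2
  have h3' : dE * rE' < dE' * rE := by exact_mod_cast h3
  have hA : 0 ≤ dF * rE - dE * rF := by linarith
  have hB : 0 ≤ dE' * rF - dF * rE' := by linarith
  have hAprod : 0 ≤ (dF * rE - dE * rF) * (rE' - rF) :=
    mul_nonneg hA (by linarith)
  have hBprod : 0 ≤ (dE' * rF - dF * rE') * (rE - rF) :=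
    mul_nonneg hB (by linarith)
  simp only [chargeBracket]
  constructor
  · nlinarith [hAprod, hBprod, hrF]
  · constructor
    · intro heq
      -- both nonneg products must be zero
      have hsum : (dF * rE - dE * rF) * (rE' - rF) +
          (dE' * rF - dF * rE') * (rE - rF) = 0 := by nlinarith [hrF]
      have hBzero : (dE' * rF - dF * rE') * (rE - rF) = 0 := by nlinarith
      have hB0 : dE' * rF - dF * rE' = 0 := by
        rcases mul_eq_zero.1 hBzero with h | h
        · exact h
        · linarith
      have hAzero : (dF * rE - dE * rF) * (rE' - rF) = 0 := by linarith
      have hApos : 0 < dF * rE - dE * rF := by nlinarith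
      have hrFE' : rF = rE' := by
        rcases mul_eq_zero.1 hAzero with h | h
        · linarith
        · linarith
      refine ⟨?_, hrFE'⟩
      rw [div_eq_div_iff hrFQ.ne' hrE'Q.ne']
      exact_mod_cast (by linarith : dF * rE' = dE' * rF)
    · rintro ⟨hslope, hr⟩
      rw [div_eq_div_iff hrFQ.ne' hrE'Q.ne'] at hslope
      have hs : dF * rE' = dE' * rF := by exact_mod_cast hslope
      subst hr
      ring_nf
      nlinarith [hs]
end
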